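/- arXiv:2605.29936 — 2 statements merged into one kernel-verified Lean document; each statement's English description precedes it below -/
import Mathlib

section
/- For every n ≥ 1, the number of Dyck paths of semilength n having no peak at height 2 equals catalan(n − 1); equivalently, the generating function of Dyck paths with no peak at height 2 is 1 + x·C(x). -/
open DyckStep List PowerSeries

/-- A Dyck word `p` has a peak at height `h`: an up-step immediately followed by a
down-step, such that the prefix ending with that up-step has `h` more `U`s than `D`s. -/
def DyckWord.HasPeakAtHeight (p : DyckWord) (h : ℕ) : Prop :=
  ∃ i, i + 1 < p.toList.length ∧ p.toList.getD i D = U ∧ p.toList.getD (i + 1) U = D ∧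
    (p.toList.take (i + 1)).count U = (p.toList.take (i + 1)).count D + h

namespace DyckWord

lemma hasPeak_iff {p : DyckWord} {h : ℕ} : p.HasPeakAtHeight h ↔
    ∃ x y, p.toList = x ++ U :: D :: y ∧ x.count U + 1 = x.count D + h := by
  constructor
  · rintro ⟨i, hlen, hU, hD, hc⟩
    have hi : i < p.toList.length := by omega
    have hU' : p.toList[i] = U := by rwa [List.getD_eq_getElem _ _ hi] at hU
    have hD' : p.toList[i+1] = D := by rwa [List.getD_eq_getElem _ _ hlen] at hD
    refine ⟨p.toList.take i, p.toList.drop (i + 2), ?_, ?_⟩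
    · have e1 : p.toList.drop i = p.toList[i] :: p.toList.drop (i + 1) := List.drop_eq_getElem_cons hi
      have e2 : p.toList.drop (i+1) = p.toList[i+1] :: p.toList.drop (i + 2) :=
        List.drop_eq_getElem_cons hlen
      conv_lhs => rw [← p.toList.take_append_drop i, e1, e2, hU', hD']
    · have e : p.toList.take (i+1) = p.toList.take i ++ [U] := by
        rw [← List.take_concat_get' _ _ hi, hU']
      rw [e, List.count_append, List.count_append] at hc
      simp at hc
      omega
  · rintro ⟨x, y, he, hc⟩
    have hlen : x.length + 1 < p.toList.length := by rw [he]; simp <;> omega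
    refine ⟨x.length, hlen, ?_, ?_, ?_⟩
    · rw [he, List.getD_eq_getElem _ _ (by simp <;> omega), List.getElem_append_right (le_refl _)]
      simp
    · rw [he, List.getD_eq_getElem _ _ (by rw [he] at hlen; exact hlen)]
      have : (x ++ U :: D :: y)[x.length + 1] = (U :: D :: y)[1] := by
        rw [List.getElem_append_right (by omega)]
        congr 1; omega
      rw [this]; rfl
    · rw [he]
      have : (x ++ U :: D :: y).take (x.length + 1) = x ++ [U] := by
        rw [List.take_append]
        simp
      rw [this, List.count_append, List.count_append]
      simp
      omega


lemma not_hasPeak_zero (p : DyckWord) : ¬ p.HasPeakAtHeight 0 := by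
  rw [hasPeak_iff]
  rintro ⟨x, y, he, hc⟩
  have h1 := p.count_D_le_count_U x.length
  rw [he, List.take_append] at h1
  simp at h1
  omega

lemma toList_nest_add (a b : DyckWord) :
    (a.nest + b).toList = U :: (a.toList ++ D :: b.toList) := by
  show (a.nest.toList ++ b.toList) = _
  show ([U] ++ a.toList ++ [D]) ++ b.toList = _
  simp

lemma hasPeak_nest_add (a b : DyckWord) (h : ℕ) :
    (a.nest + b).HasPeakAtHeight (h+1) ↔
      (a = 0 ∧ h = 0) ∨ a.HasPeakAtHeight h ∨ b.HasPeakAtHeight (h+1) := by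
  rw [hasPeak_iff, toList_nest_add]
  constructor
  · rintro ⟨x, y, he, hc⟩
    match x, he with
    | [], he =>
      simp only [List.nil_append, List.cons.injEq] at he
      obtain ⟨-, he⟩ := he
      match hla : a.toList, he with
      | [], he =>
        left
        have : a = 0 := toList_eq_nil.mp hla
        simp at hc
        exact ⟨this, by omega⟩
      | c :: t, he =>
        exfalso
        have hU := a.head_eq_U (by rw [hla]; simp)
        simp only [hla, List.head_cons] at hU
        simp only [List.cons_append, List.cons.injEq] at he
        rw [hU] at he
        exact absurd he.1 (by simp)
    | s :: x', he =>
      simp only [List.cons_append, List.cons.injEq] at he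
      obtain ⟨hs, he⟩ := he
      rw [List.append_eq_append_iff] at he
      rcases he with ⟨a', ha1, ha2⟩ | ⟨c', hc1, hc2⟩
      · match a', ha2 with
        | [], ha2 => simp at ha2
        | e :: a'', ha2 =>
          simp only [List.cons_append, List.cons.injEq] at ha2
          obtain ⟨he2, hlb⟩ := ha2
          right; right
          rw [hasPeak_iff]
          refine ⟨a'', y, hlb, ?_⟩
          subst hs he2 ha1
          have hc' := a.count_U_eq_count_D
          simp [List.count_append] at hc
          omega
      · match c', hc2 with
        | [], hc2 => simp at hc2
        | e :: c'', hc2 =>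
          simp only [List.cons_append, List.cons.injEq] at hc2
          obtain ⟨he2, hc2⟩ := hc2
          match c'', hc2 with
          | [], hc2 =>
            exfalso
            subst he2
            have h1 := a.count_U_eq_count_D
            have h2 := a.count_D_le_count_U x'.length
            rw [hc1] at h1 h2
            rw [List.take_append] at h2
            simp [List.count_append] at h1 h2
            omega
          | f :: c''', hc2 =>
            simp only [List.cons_append, List.cons.injEq] at hc2
            obtain ⟨hf, hy⟩ := hc2
            right; left
            rw [hasPeak_iff]
            subst he2 hs
            rw [← hf] at hc1
            refine ⟨x', c''', hc1, ?_⟩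
            simp [List.count_append] at hc
            omega
  · rintro (⟨rfl, rfl⟩ | hp | hp)
    · refine ⟨[], b.toList, ?_, by simp⟩
      simp [show (0 : DyckWord).toList = [] from rfl]
    · rw [hasPeak_iff] at hp
      obtain ⟨x, y, he, hc⟩ := hp
      refine ⟨U :: x, y ++ D :: b.toList, ?_, ?_⟩
      · rw [he]; simp
      · simp; omega
    · rw [hasPeak_iff] at hp
      obtain ⟨x, y, he, hc⟩ := hp
      refine ⟨U :: (a.toList ++ D :: x), y, ?_, ?_⟩
      · rw [he]; simp
      · have := a.count_U_eq_count_D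
        simp [List.count_append]
        omega



lemma insidePart_nest_add (a b : DyckWord) : (a.nest + b).insidePart = a := by
  rw [insidePart_add nest_ne_zero, insidePart_nest]

lemma outsidePart_nest_add (a b : DyckWord) : (a.nest + b).outsidePart = b := by
  rw [outsidePart_add nest_ne_zero, outsidePart_nest, zero_add]

lemma sl_nest_add (a b : DyckWord) :
    (a.nest + b).semilength = a.semilength + b.semilength + 1 := by
  rw [semilength_add, semilength_nest]; omega

lemma ne_zero_of_sl {p : DyckWord} {m : ℕ} (hp : p.semilength = m + 1) : p ≠ 0 := by
  intro h0; rw [h0] at hp; simp at hp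

instance fin_sub (n : ℕ) (Q : DyckWord → Prop) : Finite {p : DyckWord // p.semilength = n ∧ Q p} :=
  Finite.of_injective (fun x => (⟨x.1, x.2.1⟩ : {p : DyckWord // p.semilength = n}))
    (by intro x y hxy; simp only [Subtype.mk.injEq] at hxy; exact Subtype.ext hxy)

lemma nat_card_sigma {n : ℕ} (X : Fin n → Type) [∀ i, Finite (X i)] :
    Nat.card ((i : Fin n) × X i) = ∑ i : Fin n, Nat.card (X i) := by
  letI : ∀ i, Fintype (X i) := fun i => Fintype.ofFinite _
  rw [Nat.card_eq_fintype_card, Fintype.card_sigma]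
  exact Finset.sum_congr rfl fun i _ => (Nat.card_eq_fintype_card).symm

/-- The decomposition equivalence. -/
noncomputable def decompEquiv (m : ℕ) (Q QI : DyckWord → Prop)
    (hQ : ∀ a b : DyckWord, Q (a.nest + b) ↔ QI a ∧ Q b) :
    {p : DyckWord // p.semilength = m + 1 ∧ Q p} ≃
      (i : Fin (m+1)) × ({a : DyckWord // a.semilength = i.1 ∧ QI a} ×
        {b : DyckWord // b.semilength = m - i.1 ∧ Q b}) := by
  refine (Equiv.ofBijective
    (fun x => ⟨x.2.1.1.nest + x.2.2.1, ?_, ?_⟩ :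
      ((i : Fin (m+1)) × ({a : DyckWord // a.semilength = i.1 ∧ QI a} ×
        {b : DyckWord // b.semilength = m - i.1 ∧ Q b})) →
      {p : DyckWord // p.semilength = m + 1 ∧ Q p}) ⟨?_, ?_⟩).symm
  · obtain ⟨⟨i, hi⟩, ⟨a, ha1, ha2⟩, ⟨b, hb1, hb2⟩⟩ := x
    rw [sl_nest_add]
    simp only at ha1 hb1 ⊢
    omega
  · obtain ⟨⟨i, hi⟩, ⟨a, ha1, ha2⟩, ⟨b, hb1, hb2⟩⟩ := x
    rw [hQ]
    exact ⟨ha2, hb2⟩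
  · rintro ⟨⟨i, hi⟩, ⟨a, ha1, ha2⟩, ⟨b, hb1, hb2⟩⟩ ⟨⟨i', hi'⟩, ⟨a', ha1', ha2'⟩, ⟨b', hb1', hb2'⟩⟩ hxy
    simp only [Subtype.mk.injEq] at hxy
    have hA : a = a' := by
      have := congrArg insidePart hxy
      rwa [insidePart_nest_add, insidePart_nest_add] at this
    have hB : b = b' := by
      have := congrArg outsidePart hxy
      rwa [outsidePart_nest_add, outsidePart_nest_add] at this
    subst hA hB
    simp only at ha1 ha1'
    have hI : i = i' := by omega
    subst hI
    rfl
  · rintro ⟨p, hp1, hp2⟩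
    have hp0 : p ≠ 0 := ne_zero_of_sl hp1
    have hsl := semilength_insidePart_add_semilength_outsidePart_add_one hp0
    have hq : QI p.insidePart ∧ Q p.outsidePart := by
      rw [← hQ]
      rwa [nest_insidePart_add_outsidePart hp0]
    refine ⟨⟨⟨p.insidePart.semilength, by omega⟩,
      ⟨p.insidePart, rfl, hq.1⟩, ⟨p.outsidePart, by simp; omega, hq.2⟩⟩, ?_⟩
    exact Subtype.ext (nest_insidePart_add_outsidePart hp0)

lemma card_step (m : ℕ) (Q QI : DyckWord → Prop)
    (hQ : ∀ a b : DyckWord, Q (a.nest + b) ↔ QI a ∧ Q b) :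
    Nat.card {p : DyckWord // p.semilength = m + 1 ∧ Q p} =
      ∑ i ∈ Finset.range (m+1),
        Nat.card {a : DyckWord // a.semilength = i ∧ QI a} *
        Nat.card {b : DyckWord // b.semilength = m - i ∧ Q b} := by
  rw [Nat.card_congr (decompEquiv m Q QI hQ), nat_card_sigma, ← Fin.sum_univ_eq_sum_range]
  exact Finset.sum_congr rfl fun i _ => Nat.card_prod _ _

lemma card_zero_q (Q : DyckWord → Prop) (hQ0 : Q 0) :
    Nat.card {p : DyckWord // p.semilength = 0 ∧ Q p} = 1 := by
  rw [Nat.card_eq_one_iff_unique]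
  constructor
  · constructor
    intro x y
    apply Subtype.ext
    have hx : x.1 = 0 := by
      have := x.2.1
      rw [← toList_eq_nil, ← List.length_eq_zero_iff, ← two_mul_semilength_eq_length, this]
    have hy : y.1 = 0 := by
      have := y.2.1
      rw [← toList_eq_nil, ← List.length_eq_zero_iff, ← two_mul_semilength_eq_length, this]
    rw [hx, hy]
  · exact ⟨⟨0, rfl, hQ0⟩⟩

lemma not_hasPeak_zero_word (h : ℕ) : ¬ (0 : DyckWord).HasPeakAtHeight h := by
  rintro ⟨i, hi, -⟩
  have : (0 : DyckWord).toList = [] := rfl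
  rw [this] at hi
  simp at hi

lemma card_ne_zero (i : ℕ) :
    Nat.card {a : DyckWord // a.semilength = i + 1 ∧ a ≠ 0} = catalan (i + 1) := by
  rw [Nat.card_congr (Equiv.subtypeEquivRight (q := fun a : DyckWord => a.semilength = i + 1)
    (fun a => ⟨fun h => h.1, fun h => ⟨h, ne_zero_of_sl h⟩⟩)),
    Nat.card_eq_fintype_card, card_dyckWord_semilength_eq_catalan]

lemma card_ne_zero' :
    Nat.card {a : DyckWord // a.semilength = 0 ∧ a ≠ 0} = 0 := by
  rw [Nat.card_eq_zero]
  left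
  constructor
  rintro ⟨a, ha1, ha2⟩
  exact ha2 (by rw [← toList_eq_nil, ← List.length_eq_zero_iff, ← two_mul_semilength_eq_length, ha1])
noncomputable def Aseq (m : ℕ) : ℕ :=
  Nat.card {p : DyckWord // p.semilength = m ∧ ¬ p.HasPeakAtHeight 1}
noncomputable def Bseq (m : ℕ) : ℕ :=
  Nat.card {p : DyckWord // p.semilength = m ∧ ¬ p.HasPeakAtHeight 2}

lemma hQB : ∀ a b : DyckWord, (¬ (a.nest + b).HasPeakAtHeight 2) ↔
    ((¬ a.HasPeakAtHeight 1) ∧ ¬ b.HasPeakAtHeight 2) := by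
  intro a b
  rw [show (2:ℕ) = 1+1 from rfl, hasPeak_nest_add]
  tauto

lemma hQA : ∀ a b : DyckWord, (¬ (a.nest + b).HasPeakAtHeight 1) ↔
    ((a ≠ 0) ∧ ¬ b.HasPeakAtHeight 1) := by
  intro a b
  rw [show (1:ℕ) = 0+1 from rfl, hasPeak_nest_add]
  have := not_hasPeak_zero a
  tauto

lemma B_rec (m : ℕ) : Bseq (m+1) = ∑ i ∈ Finset.range (m+1), Aseq i * Bseq (m - i) :=
  card_step m _ _ hQB

lemma A_rec (m : ℕ) : Aseq (m+1) = ∑ i ∈ Finset.range (m+1),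
    (Nat.card {a : DyckWord // a.semilength = i ∧ a ≠ 0}) * Aseq (m - i) :=
  card_step m _ _ hQA

lemma A_zero : Aseq 0 = 1 := card_zero_q _ (not_hasPeak_zero_word 1)
lemma B_zero : Bseq 0 = 1 := card_zero_q _ (not_hasPeak_zero_word 2)

lemma A_rec2 (n : ℕ) : Aseq (n+1) + Aseq n =
    ∑ k ∈ Finset.range (n+1), catalan k * Aseq (n - k) := by
  rw [A_rec, Finset.sum_range_succ' (fun k => catalan k * Aseq (n - k)),
    Finset.sum_range_succ' (fun k =>
      (Nat.card {a : DyckWord // a.semilength = k ∧ a ≠ 0}) * Aseq (n - k))]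
  simp only [card_ne_zero, card_ne_zero', catalan_zero, zero_mul, one_mul, add_zero, Nat.sub_zero]

noncomputable def FC : PowerSeries ℤ := PowerSeries.mk fun n => (catalan n : ℤ)
noncomputable def FA : PowerSeries ℤ := PowerSeries.mk fun n => (Aseq n : ℤ)
noncomputable def FB : PowerSeries ℤ := PowerSeries.mk fun n => (Bseq n : ℤ)

lemma hC : FC = 1 + X * FC^2 := by
  ext n
  cases n with
  | zero => simp [FC]
  | succ n =>
    rw [map_add, PowerSeries.coeff_succ_X_mul, pow_two, PowerSeries.coeff_mul]
    simp only [FC, PowerSeries.coeff_mk, PowerSeries.coeff_one, Nat.succ_ne_zero, if_false,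
      zero_add]
    rw [catalan_succ']
    push_cast
    rfl

lemma hA : FA + X * FA = 1 + X * (FC * FA) := by
  ext n
  cases n with
  | zero => simp [FA, A_zero]
  | succ n =>
    rw [map_add, map_add, PowerSeries.coeff_succ_X_mul, PowerSeries.coeff_succ_X_mul,
      PowerSeries.coeff_mul]
    simp only [FA, FC, PowerSeries.coeff_mk, PowerSeries.coeff_one, Nat.succ_ne_zero, if_false,
      zero_add]
    rw [Finset.Nat.sum_antidiagonal_eq_sum_range_succ_mk]
    rw [← Nat.cast_add, A_rec2]
    push_cast
    rfl

lemma hB : FB = 1 + X * (FA * FB) := by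
  ext n
  cases n with
  | zero => simp [FB, B_zero]
  | succ n =>
    rw [map_add, PowerSeries.coeff_succ_X_mul, PowerSeries.coeff_mul]
    simp only [FB, FA, PowerSeries.coeff_mk, PowerSeries.coeff_one, Nat.succ_ne_zero, if_false,
      zero_add]
    rw [Finset.Nat.sum_antidiagonal_eq_sum_range_succ_mk, B_rec]
    push_cast
    rfl

lemma key (m : ℕ) : Bseq (m + 1) = catalan m := by
  have hu : FA * (1 + X - X * FC) = 1 := by linear_combination hA
  have hcu : FC * (1 + X - X * FC) = 1 + X * FC := by linear_combination hC
  have hii : FC = FA * (1 + X * FC) := by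
    calc FC = FC * (FA * (1 + X - X * FC)) := by rw [hu, mul_one]
      _ = FA * (FC * (1 + X - X * FC)) := by ring
      _ = FA * (1 + X * FC) := by rw [hcu]
  have h1 : (1 + X * FC) * (1 - X * FA) = 1 := by linear_combination X * hii
  have h2 : FB * (1 - X * FA) = 1 := by linear_combination hB
  have hfinal : FB = 1 + X * FC := by
    calc FB = FB * ((1 + X * FC) * (1 - X * FA)) := by rw [h1, mul_one]
      _ = (1 + X * FC) * (FB * (1 - X * FA)) := by ring
      _ = 1 + X * FC := by rw [h2, mul_one]
  have := congrArg (PowerSeries.coeff (R := ℤ) (m+1)) hfinal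
  rw [map_add, PowerSeries.coeff_succ_X_mul] at this
  simp only [FB, FC, PowerSeries.coeff_mk, PowerSeries.coeff_one, Nat.succ_ne_zero, if_false,
    zero_add] at this
  exact_mod_cast this

end DyckWord

/-- for every `n ≥ 1`, the number of Dyck paths of semilength `n` with no
peak at height 2 equals `catalan (n − 1)`. -/
theorem stmt_16 (n : ℕ) (hn : 1 ≤ n) :
    Nat.card {p : DyckWord // p.semilength = n ∧ ¬ p.HasPeakAtHeight 2} =
      catalan (n - 1) := by
  obtain ⟨m, rfl⟩ : ∃ m, n = m + 1 := ⟨n - 1, (Nat.succ_pred_eq_of_pos hn).symm⟩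
  rw [Nat.add_sub_cancel]
  exact DyckWord.key m
end

section
/- Let g(n) be the number of Dyck paths of semilength n whose mex is 2, i.e., Dyck paths having at least one peak at height 1 and no peak at height 2. Then in ℤ⟦X⟧ one has (1 + X + X^2·C(X)) · Σ_{n≥0} g(n) X^n = X(1 − X) + 3X^2·C(X). -/
open DyckStep

/-- The generating function of the Catalan numbers, `C(X) = Σ_{n≥0} catalan(n) Xⁿ`. -/
noncomputable def catalanGF : PowerSeries ℤ :=
  PowerSeries.mk fun n => (catalan n : ℤ)

namespace Stmt17
open List Finset DyckWord

/-- getElem version of the peak predicate, on lists. -/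
def LP (l : List DyckStep) (h : ℕ) : Prop :=
  ∃ i, ∃ _ : i + 1 < l.length, l[i] = U ∧ l[i + 1] = D ∧
    (l.take (i + 1)).count U = (l.take (i + 1)).count D + h

lemma hasPeak_iff {p : DyckWord} {h : ℕ} : p.HasPeakAtHeight h ↔ LP p.toList h := by
  constructor
  · rintro ⟨i, hi, h1, h2, h3⟩
    rw [List.getD_eq_getElem _ _ (by omega)] at h1
    rw [List.getD_eq_getElem _ _ hi] at h2
    exact ⟨i, hi, h1, h2, h3⟩
  · rintro ⟨i, hi, h1, h2, h3⟩
    refine ⟨i, hi, ?_, ?_, h3⟩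
    · rwa [List.getD_eq_getElem _ _ (by omega)]
    · rwa [List.getD_eq_getElem _ _ hi]

lemma not_LP_nil (h : ℕ) : ¬ LP [] h := by rintro ⟨i, hi, -⟩; simp at hi

/-- any list with the Dyck prefix property has no peak at height 0;
we only need: counts in every prefix satisfy D ≤ U. -/
lemma not_LP_zero {l : List DyckStep}
    (hpre : ∀ i, (l.take i).count D ≤ (l.take i).count U) : ¬ LP l 0 := by
  rintro ⟨i, hi, hU, hD, hc⟩
  have ht : l.take (i + 1) = l.take i ++ [l[i]'(by omega)] := by
    rw [← take_concat_get' l i (by omega)]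
  rw [ht, hU, count_append, count_append] at hc
  have := hpre i
  simp at hc
  omega

lemma LP_nest {a : List DyckStep} (hhead : ∀ hne : a ≠ [], a.head hne = U)
    (hlast : ∀ hne : a ≠ [], a.getLast hne = D) (h : ℕ) :
    LP (U :: (a ++ [D])) (h + 1) ↔ (a = [] ∧ h = 0) ∨ LP a h := by
  constructor
  · rintro ⟨i, hi, hU, hD, hc⟩
    simp only [length_cons, length_append, length_singleton, length_nil] at hi
    rcases Nat.eq_zero_or_pos i with rfl | hpos
    · left
      rcases eq_or_ne a [] with rfl | hne
      · refine ⟨rfl, ?_⟩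
        simp at hc
        omega
      · exfalso
        have h2 : D = U := by
          calc D = (U :: (a ++ [D]))[0 + 1]'(by simp) := hD.symm
            _ = (a ++ [D])[0]'(by simp) := getElem_cons_succ ..
            _ = a[0]'(by simp [length_pos_iff.mpr hne]) :=
                getElem_append_left (by simp [length_pos_iff.mpr hne])
            _ = a.head hne := (head_eq_getElem hne).symm
            _ = U := hhead hne
        simp at h2
    · right
      obtain ⟨j, rfl⟩ : ∃ j, i = j + 1 := ⟨i - 1, by omega⟩
      rcases lt_or_ge (j + 1) a.length with hlt | hge
      · -- peak inside a at index j
        refine ⟨j, hlt, ?_, ?_, ?_⟩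
        · rw [← hU, getElem_cons_succ, getElem_append_left (by omega)]
        · rw [← hD, getElem_cons_succ, getElem_append_left hlt]
        · have ht : (U :: (a ++ [D])).take (j + 1 + 1) = U :: a.take (j + 1) := by
            rw [take_succ_cons, take_append_of_le_length (by omega)]
          rw [ht] at hc
          simp [count_cons] at hc
          omega
      · -- i = a.length: contradiction with getLast
        exfalso
        have hja : j + 1 = a.length := by omega
        have hne : a ≠ [] := by rintro rfl; simp at hja
        have : U = D := by
          calc U = (U :: (a ++ [D]))[j+1]'(by simp; omega) := hU.symm
            _ = (a ++ [D])[j]'(by simp; omega) := getElem_cons_succ ..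
            _ = a[j]'(by omega) := getElem_append_left (by omega)
            _ = a[a.length - 1]'(by omega) := by congr 1; omega
            _ = a.getLast hne := (getLast_eq_getElem hne).symm
            _ = D := hlast hne
        simp at this
  · rintro (⟨rfl, rfl⟩ | ⟨i, hi, hU, hD, hc⟩)
    · exact ⟨0, by simp, by simp, by simp, by simp⟩
    · refine ⟨i + 1, by simp; omega, ?_, ?_, ?_⟩
      · rw [getElem_cons_succ, getElem_append_left (by omega)]; exact hU
      · rw [getElem_cons_succ, getElem_append_left hi]; exact hD
      · have ht : (U :: (a ++ [D])).take (i + 1 + 1) = U :: a.take (i + 1) := by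
          rw [take_succ_cons, take_append_of_le_length (by omega)]
        rw [ht]
        simp [count_cons]
        omega

lemma LP_append {a b : List DyckStep} (hbal : a.count U = a.count D)
    (hlast : ∀ hne : a ≠ [], a.getLast hne = D) (h : ℕ) :
    LP (a ++ b) h ↔ LP a h ∨ LP b h := by
  constructor
  · rintro ⟨i, hi, hU, hD, hc⟩
    rw [length_append] at hi
    rcases lt_trichotomy (i + 1) a.length with hlt | heq | hgt
    · left
      refine ⟨i, hlt, ?_, ?_, ?_⟩
      · rw [← hU]; exact (getElem_append_left (by omega)).symm
      · rw [← hD]; exact (getElem_append_left hlt).symm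
      · rwa [take_append_of_le_length hlt.le] at hc
    · exfalso
      have hne : a ≠ [] := by rintro rfl; simp at heq
      have h2 : U = D := by
        calc U = (a ++ b)[i]'(by rw [length_append]; omega) := hU.symm
        _ = a[i]'(by omega) := getElem_append_left (by omega)
        _ = a[a.length - 1]'(by omega) := by congr 1; omega
        _ = a.getLast hne := (getLast_eq_getElem hne).symm
        _ = D := hlast hne
      simp at h2
    · right
      have hla : a.length ≤ i := by omega
      refine ⟨i - a.length, by omega, ?_, ?_, ?_⟩
      · rw [← hU]; exact (getElem_append_right hla).symm
      · calc b[i - a.length + 1]'(by omega)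
            = b[i + 1 - a.length]'(by omega) := by congr 1; omega
          _ = (a ++ b)[i + 1]'(by rw [length_append]; omega) :=
              (getElem_append_right (by omega)).symm
          _ = D := hD
      · rw [take_append, take_of_length_le (by omega), count_append,
          count_append, hbal] at hc
        rw [show i - a.length + 1 = i + 1 - a.length by omega]
        omega
  · rintro (⟨i, hi, hU, hD, hc⟩ | ⟨i, hi, hU, hD, hc⟩)
    · refine ⟨i, by rw [length_append]; omega, ?_, ?_, ?_⟩
      · rw [getElem_append_left (by omega)]; exact hU
      · rw [getElem_append_left hi]; exact hD
      · rwa [take_append_of_le_length hi.le]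
    · refine ⟨a.length + i, by rw [length_append]; omega, ?_, ?_, ?_⟩
      · calc (a ++ b)[a.length + i]'(by rw [length_append]; omega)
            = b[a.length + i - a.length]'(by omega) := getElem_append_right (by omega)
          _ = b[i]'(by omega) := by congr 1; omega
          _ = U := hU
      · calc (a ++ b)[a.length + i + 1]'(by rw [length_append]; omega)
            = b[a.length + i + 1 - a.length]'(by omega) := getElem_append_right (by omega)
          _ = b[i + 1]'(by omega) := by congr 1; omega
          _ = D := hD
      · rw [show a.length + i + 1 = a.length + (i + 1) by omega, take_length_add_append, count_append,
          count_append, hbal]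
        omega


noncomputable def cnt (Q : DyckWord → Prop) (n : ℕ) : ℕ :=
  Nat.card {p : DyckWord // p.semilength = n ∧ Q p}

instance cntFin (Q : DyckWord → Prop) (n : ℕ) : Finite {p : DyckWord // p.semilength = n ∧ Q p} :=
  Finite.of_injective (fun x => (⟨x.1, x.2.1⟩ : {p : DyckWord // p.semilength = n}))
    (fun a b hab => Subtype.ext (by simpa using congrArg Subtype.val hab))

lemma semilength_eq_zero {p : DyckWord} (h : p.semilength = 0) : p = 0 := by
  have := p.two_mul_semilength_eq_length
  rw [h] at this
  rw [← DyckWord.toList_eq_nil, ← length_eq_zero_iff]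
  omega

lemma cnt_rec (Q Q1 Q2 : DyckWord → Prop)
    (hQ : ∀ q r : DyckWord, Q (q.nest + r) ↔ Q1 q ∧ Q2 r) (n : ℕ) :
    cnt Q (n + 1) = ∑ jk ∈ antidiagonal n, cnt Q1 jk.1 * cnt Q2 jk.2 := by
  have hin : ∀ q r : DyckWord, (q.nest + r).insidePart = q := fun q r => by
    rw [insidePart_add nest_ne_zero, insidePart_nest]
  have hout : ∀ q r : DyckWord, (q.nest + r).outsidePart = r := fun q r => by
    rw [outsidePart_add nest_ne_zero, outsidePart_nest, zero_add]
  have h0 : ∀ x : {p : DyckWord // p.semilength = n + 1 ∧ Q p}, x.1 ≠ 0 := fun x e => by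
    have := x.2.1
    rw [e] at this
    simp at this
  let Fib := fun jk : {x : ℕ × ℕ // x ∈ antidiagonal n} =>
    ({q : DyckWord // q.semilength = jk.1.1 ∧ Q1 q} ×
     {r : DyckWord // r.semilength = jk.1.2 ∧ Q2 r})
  let F : (jk : {x : ℕ × ℕ // x ∈ antidiagonal n}) × Fib jk →
      {p : DyckWord // p.semilength = n + 1 ∧ Q p} := fun y =>
    ⟨y.2.1.1.nest + y.2.2.1, by
        have hjk := mem_antidiagonal.mp y.1.2
        have h1 := y.2.1.2.1
        have h2 := y.2.2.2.1
        simp only [semilength_add, semilength_nest, h1, h2]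
        omega,
      (hQ _ _).mpr ⟨y.2.1.2.2, y.2.2.2.2⟩⟩
  have hbij : Function.Bijective F := by
    constructor
    · rintro ⟨⟨⟨j, k⟩, hjk⟩, ⟨⟨q, hq1, hq2⟩, ⟨r, hr1, hr2⟩⟩⟩
        ⟨⟨⟨j', k'⟩, hjk'⟩, ⟨⟨q', hq1', hq2'⟩, ⟨r', hr1', hr2'⟩⟩⟩ hy
      have hv : q.nest + r = q'.nest + r' := congrArg Subtype.val hy
      have e1 : q = q' := by rw [← hin q r, hv, hin]
      have e2 : r = r' := by rw [← hout q r, hv, hout]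
      subst e1; subst e2
      dsimp only at hq1 hr1 hq1' hr1'
      have e3 : j = j' := by rw [← hq1, hq1']
      have e4 : k = k' := by rw [← hr1, hr1']
      subst e3; subst e4
      rfl
    · rintro ⟨p, hp1, hp2⟩
      have h0' : p ≠ 0 := fun e => by simp [e] at hp1
      have hsl := semilength_insidePart_add_semilength_outsidePart_add_one h0'
      have hq12 : Q1 p.insidePart ∧ Q2 p.outsidePart :=
        (hQ _ _).mp (by rw [nest_insidePart_add_outsidePart h0']; exact hp2)
      exact ⟨⟨⟨(p.insidePart.semilength, p.outsidePart.semilength),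
                mem_antidiagonal.mpr (by omega)⟩,
              ⟨⟨p.insidePart, rfl, hq12.1⟩, ⟨p.outsidePart, rfl, hq12.2⟩⟩⟩,
             Subtype.ext (nest_insidePart_add_outsidePart h0')⟩
  have E := (Equiv.ofBijective F hbij).symm
  rw [cnt, Nat.card_congr E]
  letI F1 : ∀ jk : {x : ℕ × ℕ // x ∈ antidiagonal n},
      Fintype {q : DyckWord // q.semilength = jk.1.1 ∧ Q1 q} := fun jk => Fintype.ofFinite _
  letI F2 : ∀ jk : {x : ℕ × ℕ // x ∈ antidiagonal n},
      Fintype {r : DyckWord // r.semilength = jk.1.2 ∧ Q2 r} := fun jk => Fintype.ofFinite _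
  rw [Nat.card_eq_fintype_card, Fintype.card_sigma]
  rw [← Finset.sum_coe_sort (antidiagonal n) (fun jk => cnt Q1 jk.1 * cnt Q2 jk.2)]
  congr 1
  funext jk
  rw [Fintype.card_prod, cnt, cnt, Nat.card_eq_fintype_card, Nat.card_eq_fintype_card]

section DyckPeaks

lemma toList_nest (q : DyckWord) : q.nest.toList = U :: (q.toList ++ [D]) := by
  show [U] ++ q.toList ++ [D] = _
  simp

lemma peak_add (p q : DyckWord) (h : ℕ) :
    (p + q).HasPeakAtHeight h ↔ p.HasPeakAtHeight h ∨ q.HasPeakAtHeight h := by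
  rw [hasPeak_iff, hasPeak_iff (p := p), hasPeak_iff (p := q)]
  exact LP_append p.count_U_eq_count_D (fun hne => p.getLast_eq_D hne) h

lemma peak_nest (q : DyckWord) (h : ℕ) :
    q.nest.HasPeakAtHeight (h + 1) ↔ (q = 0 ∧ h = 0) ∨ q.HasPeakAtHeight h := by
  rw [hasPeak_iff, hasPeak_iff (p := q)]
  have : LP q.nest.toList (h + 1) ↔ LP (U :: (q.toList ++ [D])) (h + 1) := by
    rw [toList_nest]
  rw [this, LP_nest (fun hne => q.head_eq_U hne) (fun hne => q.getLast_eq_D hne)]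
  rw [← DyckWord.toList_eq_nil]

lemma no_peak_zero (p : DyckWord) : ¬ p.HasPeakAtHeight 0 := by
  rw [hasPeak_iff]
  exact not_LP_zero p.count_D_le_count_U

lemma zero_no_peak (h : ℕ) : ¬ (0 : DyckWord).HasPeakAtHeight h := by
  rw [hasPeak_iff]
  exact not_LP_nil h

lemma key1 (q r : DyckWord) :
    (q.nest + r).HasPeakAtHeight 1 ↔ q = 0 ∨ r.HasPeakAtHeight 1 := by
  rw [peak_add, show (1 : ℕ) = 0 + 1 from rfl, peak_nest]
  have := no_peak_zero q
  tauto

lemma key2 (q r : DyckWord) :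
    (q.nest + r).HasPeakAtHeight 2 ↔ q.HasPeakAtHeight 1 ∨ r.HasPeakAtHeight 2 := by
  rw [peak_add, show (2 : ℕ) = 1 + 1 from rfl, peak_nest]
  constructor
  · rintro ((⟨-, h⟩ | h) | h)
    · omega
    · exact Or.inl h
    · exact Or.inr h
  · rintro (h | h)
    · exact Or.inl (Or.inr h)
    · exact Or.inr h

end DyckPeaks

section CntValues

lemma cnt_zero_of (Q : DyckWord → Prop) (hQ0 : Q 0) : cnt Q 0 = 1 := by
  haveI : Unique {p : DyckWord // p.semilength = 0 ∧ Q p} :=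
    { default := ⟨0, by simp, hQ0⟩
      uniq := fun x => Subtype.ext (semilength_eq_zero x.2.1) }
  exact Nat.card_unique

lemma cnt_zero_not (Q : DyckWord → Prop) (hQ0 : ¬ Q 0) : cnt Q 0 = 0 := by
  haveI : IsEmpty {p : DyckWord // p.semilength = 0 ∧ Q p} :=
    ⟨fun x => hQ0 (semilength_eq_zero x.2.1 ▸ x.2.2)⟩
  exact Nat.card_of_isEmpty

lemma cnt_ne_zero_succ (n : ℕ) : cnt (fun q => q ≠ 0) (n + 1) = catalan (n + 1) := by
  rw [cnt, Nat.card_congr (Equiv.subtypeEquivRight (q := fun p : DyckWord =>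
    p.semilength = n + 1) (fun p => ⟨fun h => h.1, fun h => ⟨h, fun e => by simp [e] at h⟩⟩))]
  rw [Nat.card_eq_fintype_card, card_dyckWord_semilength_eq_catalan]

lemma cnt_and_ne_succ (Q : DyckWord → Prop) (n : ℕ) :
    cnt (fun q => q ≠ 0 ∧ Q q) (n + 1) = cnt Q (n + 1) := by
  rw [cnt, cnt]
  apply Nat.card_congr
  exact Equiv.subtypeEquivRight (fun p =>
    ⟨fun h => ⟨h.1, h.2.2⟩, fun h => ⟨h.1, fun e => by simp [e] at h, h.2⟩⟩)

lemma cnt_split (n : ℕ) :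
    cnt (fun p : DyckWord => ¬ p.HasPeakAtHeight 2) n =
      cnt (fun p => p.HasPeakAtHeight 1 ∧ ¬ p.HasPeakAtHeight 2) n +
      cnt (fun p => ¬ p.HasPeakAtHeight 1 ∧ ¬ p.HasPeakAtHeight 2) n := by
  classical
  rw [cnt, cnt, cnt, ← Nat.card_sum]
  apply Nat.card_congr
  exact
    { toFun := fun x =>
        if h : x.1.HasPeakAtHeight 1 then Sum.inl ⟨x.1, x.2.1, h, x.2.2⟩
        else Sum.inr ⟨x.1, x.2.1, h, x.2.2⟩
      invFun := Sum.elim (fun y => ⟨y.1, y.2.1, y.2.2.2⟩) (fun y => ⟨y.1, y.2.1, y.2.2.2⟩)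
      left_inv := fun x => by by_cases h : x.1.HasPeakAtHeight 1 <;> simp [h]
      right_inv := fun y => by
        rcases y with y | y
        · simp [y.2.2.1]
        · simp [y.2.2.1] }

end CntValues

section GF

open PowerSeries

noncomputable def Bgf : PowerSeries ℤ :=
  PowerSeries.mk fun n => (cnt (fun p => ¬ p.HasPeakAtHeight 1) n : ℤ)
noncomputable def Tgf : PowerSeries ℤ :=
  PowerSeries.mk fun n => (cnt (fun p => ¬ p.HasPeakAtHeight 2) n : ℤ)
noncomputable def Hgf : PowerSeries ℤ :=
  PowerSeries.mk fun n =>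
    (cnt (fun p => ¬ p.HasPeakAtHeight 1 ∧ ¬ p.HasPeakAtHeight 2) n : ℤ)
noncomputable def Ggf : PowerSeries ℤ :=
  PowerSeries.mk fun n =>
    (cnt (fun p => p.HasPeakAtHeight 1 ∧ ¬ p.HasPeakAtHeight 2) n : ℤ)

lemma mk_one_add {f g h' : ℕ → ℤ} (h0 : f 0 = 1)
    (hs : ∀ n, f (n + 1) = ∑ jk ∈ antidiagonal n, g jk.1 * h' jk.2) :
    PowerSeries.mk f = 1 + PowerSeries.X * (PowerSeries.mk g * PowerSeries.mk h') := by
  ext n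
  cases n with
  | zero => simp [h0, PowerSeries.coeff_one]
  | succ n =>
    rw [PowerSeries.coeff_mk, map_add, PowerSeries.coeff_succ_X_mul, PowerSeries.coeff_mul,
      hs n]
    simp [PowerSeries.coeff_mk, PowerSeries.coeff_one]

lemma hCeq : catalanGF = 1 + PowerSeries.X * (catalanGF * catalanGF) := by
  apply mk_one_add (by simp)
  intro n
  rw [catalan_succ']
  push_cast
  rfl

lemma mkC' : PowerSeries.mk (fun n => (cnt (fun q : DyckWord => q ≠ 0) n : ℤ)) =
    catalanGF - 1 := by
  ext n
  rw [PowerSeries.coeff_mk, map_sub]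
  cases n with
  | zero =>
    rw [cnt_zero_not _ (by simp)]
    simp [catalanGF]
  | succ n =>
    rw [cnt_ne_zero_succ]
    simp [catalanGF, PowerSeries.coeff_one]

lemma mkB' : PowerSeries.mk
      (fun n => (cnt (fun q : DyckWord => q ≠ 0 ∧ ¬ q.HasPeakAtHeight 1) n : ℤ)) =
    Bgf - 1 := by
  ext n
  rw [PowerSeries.coeff_mk, map_sub]
  cases n with
  | zero =>
    rw [cnt_zero_not _ (by simp)]
    rw [show (PowerSeries.coeff 0) Bgf = ((cnt (fun p => ¬ p.HasPeakAtHeight 1) 0 : ℕ) : ℤ)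
      from PowerSeries.coeff_mk 0 _]
    rw [cnt_zero_of _ (zero_no_peak 1)]
    simp
  | succ n =>
    rw [cnt_and_ne_succ]
    rw [show (PowerSeries.coeff (n+1)) Bgf =
      ((cnt (fun p => ¬ p.HasPeakAtHeight 1) (n+1) : ℕ) : ℤ) from PowerSeries.coeff_mk _ _]
    simp [PowerSeries.coeff_one]

lemma hBeq : Bgf = 1 + PowerSeries.X * ((catalanGF - 1) * Bgf) := by
  rw [← mkC']
  apply mk_one_add
  · rw [cnt_zero_of _ (zero_no_peak 1)]; norm_num
  · intro n
    have hQ : ∀ q r : DyckWord,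
        (¬ (q.nest + r).HasPeakAtHeight 1) ↔ (q ≠ 0) ∧ ¬ r.HasPeakAtHeight 1 := by
      intro q r
      rw [key1]
      tauto
    have := cnt_rec (fun p => ¬ p.HasPeakAtHeight 1) (fun q => q ≠ 0)
      (fun r => ¬ r.HasPeakAtHeight 1) hQ n
    push_cast [this]
    rfl

lemma hTeq : Tgf = 1 + PowerSeries.X * (Bgf * Tgf) := by
  apply mk_one_add
  · rw [cnt_zero_of _ (zero_no_peak 2)]; norm_num
  · intro n
    have hQ : ∀ q r : DyckWord,
        (¬ (q.nest + r).HasPeakAtHeight 2) ↔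
          (¬ q.HasPeakAtHeight 1) ∧ ¬ r.HasPeakAtHeight 2 := by
      intro q r
      rw [key2]
      tauto
    have := cnt_rec (fun p => ¬ p.HasPeakAtHeight 2) (fun q => ¬ q.HasPeakAtHeight 1)
      (fun r => ¬ r.HasPeakAtHeight 2) hQ n
    push_cast [this]
    rfl

lemma hHeq : Hgf = 1 + PowerSeries.X * ((Bgf - 1) * Hgf) := by
  rw [← mkB']
  apply mk_one_add
  · rw [cnt_zero_of _ ⟨zero_no_peak 1, zero_no_peak 2⟩]; norm_num
  · intro n
    have hQ : ∀ q r : DyckWord,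
        ((¬ (q.nest + r).HasPeakAtHeight 1) ∧ ¬ (q.nest + r).HasPeakAtHeight 2) ↔
          (q ≠ 0 ∧ ¬ q.HasPeakAtHeight 1) ∧
            ((¬ r.HasPeakAtHeight 1) ∧ ¬ r.HasPeakAtHeight 2) := by
      intro q r
      rw [key1, key2]
      tauto
    have := cnt_rec (fun p => ¬ p.HasPeakAtHeight 1 ∧ ¬ p.HasPeakAtHeight 2)
      (fun q => q ≠ 0 ∧ ¬ q.HasPeakAtHeight 1)
      (fun r => ¬ r.HasPeakAtHeight 1 ∧ ¬ r.HasPeakAtHeight 2) hQ n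
    push_cast [this]
    rfl

lemma hsplit : Tgf = Ggf + Hgf := by
  ext n
  rw [Tgf, Ggf, Hgf, map_add, PowerSeries.coeff_mk, PowerSeries.coeff_mk,
    PowerSeries.coeff_mk, cnt_split n]
  push_cast
  ring

end GF

end Stmt17

open Stmt17 in
/-- if `g n` is the number of Dyck paths of semilength `n` with mex 2
(at least one peak at height 1 and no peak at height 2), then
`(1 + X + X²·C(X)) · Σ g(n) Xⁿ = X(1 − X) + 3X²·C(X)` in `ℤ⟦X⟧`. -/
theorem stmt_17 :
    (1 + (PowerSeries.X : PowerSeries ℤ) + PowerSeries.X ^ 2 * catalanGF) *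
        PowerSeries.mk
          (fun n =>
            (Nat.card {p : DyckWord //
              p.semilength = n ∧ p.HasPeakAtHeight 1 ∧ ¬ p.HasPeakAtHeight 2} : ℤ)) =
      PowerSeries.X * (1 - PowerSeries.X) + 3 * PowerSeries.X ^ 2 * catalanGF := by
  have hGG : PowerSeries.mk
      (fun n =>
        (Nat.card {p : DyckWord //
          p.semilength = n ∧ p.HasPeakAtHeight 1 ∧ ¬ p.HasPeakAtHeight 2} : ℤ)) = Ggf := rfl
  rw [hGG]
  have hG : Ggf = Tgf - Hgf := by rw [hsplit]; ring
  rw [hG]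
  set X : PowerSeries ℤ := PowerSeries.X
  set Cg : PowerSeries ℤ := catalanGF
  have e1 : X * Cg * Cg = Cg - 1 := by linear_combination - hCeq
  have e2 : Bgf + X * Bgf * Cg = Cg := by linear_combination Cg * hBeq + Bgf * e1
  have e3 : (1 - X * Bgf) * (Tgf - (1 + X * Cg)) = 0 := by
    linear_combination hTeq + X * e2
  have hnz : (1 - X * Bgf) ≠ 0 := by
    intro hz
    have := congrArg (PowerSeries.constantCoeff) hz
    simp [X] at this
  have e4 : Tgf = 1 + X * Cg := by
    rcases mul_eq_zero.mp e3 with h | h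
    · exact absurd h hnz
    · exact sub_eq_zero.mp h
  linear_combination (1 + X + X^2 * Cg) * e4 + X^2 * e1 - (1 + X * Cg) * hHeq -
    X * Hgf * e2
end
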